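/- The maximal proper infall time from horizon to singularity for a neutral toral AdS black hole, τ_max = ∫₀^{r_h} (2M/(πK²r) − r²/L²)^{−1/2} dr with r_h = (2ML²/(πK²))^{1/3}, equals πL/3, independent of M and K. -/

import Mathlib

open Real

/-- Maximal infall time from horizon to singularity for a neutral toral AdS black hole
    equals πL/3, independent of M and K. -/
theorem stmt6 (M K L : ℝ) (hM : 0 < M) (hK : 0 < K) (hL : 0 < L) :
    let rh := (2*M*L^2/(π*K^2)) ^ ((1:ℝ)/3)
    MeasureTheory.IntegrableOn
      (fun r : ℝ => (Real.sqrt (2*M/(π*K^2*r) - r^2/L^2))⁻¹) (Set.Ioo 0 rh) ∧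
    ∫ r in Set.Ioo (0:ℝ) rh, (Real.sqrt (2*M/(π*K^2*r) - r^2/L^2))⁻¹ = π*L/3 := by
  intro rh
  have hπ : (0:ℝ) < π := Real.pi_pos
  have hx : (0:ℝ) < 2*M*L^2/(π*K^2) := by positivity
  have hrh : 0 < rh := Real.rpow_pos_of_pos hx _
  have hrh3 : rh^3 = 2*M*L^2/(π*K^2) := by
    show ((2*M*L^2/(π*K^2)) ^ ((1:ℝ)/3))^(3:ℕ) = _
    rw [← Real.rpow_natCast ((2*M*L^2/(π*K^2)) ^ ((1:ℝ)/3)) 3, ← Real.rpow_mul hx.le]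
    norm_num
  set f : ℝ → ℝ := fun r : ℝ => (Real.sqrt (2*M/(π*K^2*r) - r^2/L^2))⁻¹ with hf
  -- pointwise formula on the open interval
  have key : ∀ r ∈ Set.Ioo (0:ℝ) rh,
      f r = L * Real.sqrt r / Real.sqrt (rh^3 - r^3) := by
    rintro r ⟨hr0, hrrh⟩
    have hcube : r^3 < rh^3 := pow_lt_pow_left₀ hrrh hr0.le (by norm_num)
    have hnum : (0:ℝ) ≤ rh^3 - r^3 := by linarith
    have h1 : 2*M/(π*K^2*r) - r^2/L^2 = (rh^3 - r^3)/(r * L^2) := by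
      rw [hrh3]; field_simp
    simp only [hf, h1, Real.sqrt_div hnum, Real.sqrt_mul hr0.le, Real.sqrt_sq hL.le]
    rw [inv_div]
    ring
  -- the antiderivative
  set F : ℝ → ℝ := fun r : ℝ => (2*L/3) * Real.arcsin (Real.sqrt (r^3 / rh^3)) with hF
  have hFderiv : ∀ r ∈ Set.Ioo (0:ℝ) rh, HasDerivAt F (f r) r := by
    rintro r ⟨hr0, hrrh⟩
    have hcube : r^3 < rh^3 := pow_lt_pow_left₀ hrrh hr0.le (by norm_num)
    have hq0 : 0 < r^3 / rh^3 := by positivity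
    have hq1 : r^3 / rh^3 < 1 := (div_lt_one (by positivity)).2 hcube
    have hs0 : 0 < Real.sqrt (r^3 / rh^3) := Real.sqrt_pos.2 hq0
    have hs1 : Real.sqrt (r^3 / rh^3) < 1 := by
      rw [show (1:ℝ) = Real.sqrt 1 by simp]
      exact Real.sqrt_lt_sqrt hq0.le hq1
    have h1 : HasDerivAt (fun r : ℝ => r^3 / rh^3) (3*r^2 / rh^3) r := by
      simpa using (hasDerivAt_pow 3 r).div_const (rh^3)
    have h2 := h1.sqrt (ne_of_gt hq0)
    have h3 := ((Real.hasDerivAt_arcsin (by linarith) (ne_of_lt hs1)).comp r h2).const_mul (2*L/3)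
    refine h3.congr_deriv (Eq.symm ?_)
    have hsq : Real.sqrt (r^3 / rh^3) ^ 2 = r^3 / rh^3 := Real.sq_sqrt hq0.le
    rw [key r ⟨hr0, hrrh⟩, hsq]
    have e1 : (1:ℝ) - r^3/rh^3 = (rh^3 - r^3)/rh^3 := by field_simp
    have e2 : Real.sqrt ((rh^3 - r^3)/rh^3) = Real.sqrt (rh^3 - r^3) / Real.sqrt (rh^3) :=
      Real.sqrt_div (by linarith) _
    have e3 : Real.sqrt (r^3/rh^3) = Real.sqrt (r^3) / Real.sqrt (rh^3) :=
      Real.sqrt_div (by positivity) _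
    have e4 : Real.sqrt (r^3) = r * Real.sqrt r := by
      rw [show r^3 = r^2 * r by ring, Real.sqrt_mul (by positivity), Real.sqrt_sq hr0.le]
    have hsr : 0 < Real.sqrt r := Real.sqrt_pos.2 hr0
    have hsd : 0 < Real.sqrt (rh^3 - r^3) := Real.sqrt_pos.2 (by linarith)
    have hsrh : 0 < Real.sqrt (rh^3) := Real.sqrt_pos.2 (by positivity)
    have hmul : Real.sqrt (rh^3) * Real.sqrt (rh^3) = rh^3 := Real.mul_self_sqrt (by positivity)
    have hmulr : Real.sqrt r * Real.sqrt r = r := Real.mul_self_sqrt hr0.le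
    rw [e1, e2, e3, e4]
    field_simp
    linear_combination (rh^3) * hmulr
      - r * hmul
  -- integrability
  have hmono : ∀ r ∈ Set.Ioo (0:ℝ) rh,
      f r ≤ (L * Real.sqrt rh / rh) * (Real.sqrt (rh - r))⁻¹ := by
    rintro r ⟨hr0, hrrh⟩
    have hcube : r^3 < rh^3 := pow_lt_pow_left₀ hrrh hr0.le (by norm_num)
    rw [key r ⟨hr0, hrrh⟩]
    have hbd : (rh - r) * rh^2 ≤ rh^3 - r^3 := by
      nlinarith [mul_nonneg (mul_nonneg hr0.le (sub_nonneg.2 hrrh.le)) (by linarith : (0:ℝ) ≤ rh + r)]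
    have h1 : Real.sqrt (rh - r) * rh ≤ Real.sqrt (rh^3 - r^3) := by
      have := Real.sqrt_le_sqrt hbd
      rwa [Real.sqrt_mul (by linarith), Real.sqrt_sq hrh.le] at this
    have hsd : 0 < Real.sqrt (rh - r) := Real.sqrt_pos.2 (by linarith)
    have hpos : 0 < Real.sqrt (rh - r) * rh := by positivity
    have h2 : L * Real.sqrt r / Real.sqrt (rh^3 - r^3)
        ≤ L * Real.sqrt r / (Real.sqrt (rh - r) * rh) := by
      apply div_le_div_of_nonneg_left (by positivity) hpos h1
    refine h2.trans ?_
    have h3 : Real.sqrt r ≤ Real.sqrt rh := Real.sqrt_le_sqrt hrrh.le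
    rw [div_le_iff₀ hpos]
    have : (L * Real.sqrt rh / rh) * (Real.sqrt (rh - r))⁻¹ * (Real.sqrt (rh - r) * rh)
        = L * Real.sqrt rh := by field_simp
    rw [this]
    nlinarith [Real.sqrt_nonneg r]
  have hfpos : ∀ r ∈ Set.Ioo (0:ℝ) rh, 0 ≤ f r := by
    intro r hr; exact inv_nonneg.2 (Real.sqrt_nonneg _)
  have hgint : MeasureTheory.IntegrableOn
      (fun r : ℝ => (L * Real.sqrt rh / rh) * (Real.sqrt (rh - r))⁻¹) (Set.Ioo 0 rh) := by
    have h0 : IntervalIntegrable (fun x : ℝ => x ^ (-(1:ℝ)/2)) MeasureTheory.volume 0 rh :=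
      intervalIntegral.intervalIntegrable_rpow' (by norm_num)
    have h1 := (h0.comp_sub_left rh).const_mul (L * Real.sqrt rh / rh)
    simp only [sub_zero, sub_self] at h1
    have h2 : MeasureTheory.IntegrableOn
        (fun x : ℝ => (L * Real.sqrt rh / rh) * ((rh - x) ^ (-(1:ℝ)/2))) (Set.Ioo 0 rh) := by
      have := h1.2
      rwa [integrableOn_Ioc_iff_integrableOn_Ioo] at this
    apply h2.congr_fun _ measurableSet_Ioo
    rintro r ⟨hr0, hrrh⟩
    show (L * Real.sqrt rh / rh) * ((rh - r) ^ (-(1:ℝ)/2))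
        = (L * Real.sqrt rh / rh) * (Real.sqrt (rh - r))⁻¹
    rw [show (-(1:ℝ)/2) = -((1:ℝ)/2) by norm_num,
      Real.rpow_neg (by linarith), ← Real.sqrt_eq_rpow]
  have hcont : ContinuousOn f (Set.Ioo 0 rh) := by
    apply ContinuousOn.inv₀
    · apply Real.continuous_sqrt.comp_continuousOn
      apply ContinuousOn.sub
      · exact (continuousOn_const.div (continuousOn_const.mul continuousOn_id)
          (fun r hr => by have := hr.1; positivity))
      · exact (continuousOn_id.pow 2).div_const _
    · rintro r ⟨hr0, hrrh⟩
      have hcube : r^3 < rh^3 := pow_lt_pow_left₀ hrrh hr0.le (by norm_num)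
      have h1 : 2*M/(π*K^2*r) - r^2/L^2 = (rh^3 - r^3)/(r * L^2) := by
        rw [hrh3]; field_simp
      rw [h1]
      exact ne_of_gt (Real.sqrt_pos.2 (div_pos (by linarith) (by positivity)))
  have hint : MeasureTheory.IntegrableOn f (Set.Ioo 0 rh) := by
    apply MeasureTheory.Integrable.mono hgint
      (hcont.aestronglyMeasurable measurableSet_Ioo)
    rw [MeasureTheory.ae_restrict_iff' measurableSet_Ioo]
    filter_upwards with r hr
    rw [Real.norm_eq_abs, Real.norm_eq_abs, abs_of_nonneg (hfpos r hr)]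
    have := hmono r hr
    refine this.trans (le_abs_self _)
  refine ⟨hint, ?_⟩
  have hint' : IntervalIntegrable f MeasureTheory.volume 0 rh := by
    rw [intervalIntegrable_iff_integrableOn_Ioc_of_le hrh.le,
      integrableOn_Ioc_iff_integrableOn_Ioo]
    exact hint
  have hFcont : ContinuousOn F (Set.Icc 0 rh) := by
    apply Continuous.continuousOn
    exact continuous_const.mul (Real.continuous_arcsin.comp
      (Real.continuous_sqrt.comp ((continuous_pow 3).div_const _)))
  have hftc := intervalIntegral.integral_eq_sub_of_hasDeriv_right_of_le hrh.le hFcont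
    (fun x hx => (hFderiv x hx).hasDerivWithinAt) hint'
  have hF0 : F 0 = 0 := by
    show (2*L/3) * Real.arcsin (Real.sqrt ((0:ℝ)^3/rh^3)) = 0
    norm_num [Real.sqrt_zero, Real.arcsin_zero]
  have hFrh : F rh = π * L / 3 := by
    show (2*L/3) * Real.arcsin (Real.sqrt (rh^3/rh^3)) = π * L / 3
    rw [div_self (by positivity : rh^3 ≠ (0:ℝ)), Real.sqrt_one, Real.arcsin_one]
    ring
  rw [← MeasureTheory.integral_Ioc_eq_integral_Ioo, ← intervalIntegral.integral_of_le hrh.le]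
  rw [hftc, hF0, hFrh, sub_zero]
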